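/- Let Z(λ) = ∫_ℝ e^{−λx⁴/8} dν(x). For every λ ∈ ℂ with Re λ ≥ 0, Z(λ) = ∫_ℝ (1 + i·√λ·σ)^{−1/2} dν(σ), where both integrals converge absolutely and (·)^{−1/2} denotes the principal branch. (Intermediate-field representation of the zero-dimensional φ⁴ partition function.) -/

import Mathlib

open MeasureTheory

/-- The standard Gaussian probability measure on `ℝ`, with density
`(2π)^{-1/2} exp(-σ²/2)` with respect to Lebesgue measure. -/
noncomputable def gaussianNu : Measure ℝ :=
  MeasureTheory.volume.withDensity fun σ : ℝ =>
    ENNReal.ofReal ((Real.sqrt (2 * Real.pi))⁻¹ * Real.exp (-σ ^ 2 / 2))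

open scoped ENNReal NNReal
open Complex Real Set

namespace IFR

noncomputable def gw (x : ℝ) : ℝ := (Real.sqrt (2 * Real.pi))⁻¹ * Real.exp (-x ^ 2 / 2)

lemma gw_nonneg (x : ℝ) : 0 ≤ gw x := by unfold gw; positivity

lemma gw_meas : Measurable gw := by
  unfold gw; fun_prop

lemma gaussianNu_eq : gaussianNu = ProbabilityTheory.gaussianReal 0 1 := by
  rw [ProbabilityTheory.gaussianReal_of_var_ne_zero _ one_ne_zero]
  unfold gaussianNu ProbabilityTheory.gaussianPDF ProbabilityTheory.gaussianPDFReal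
  congr 1
  ext x
  norm_num

instance : IsProbabilityMeasure gaussianNu := by
  rw [gaussianNu_eq]; infer_instance

lemma gaussianNu_eq_wd :
    gaussianNu = MeasureTheory.volume.withDensity fun x : ℝ => ((gw x).toNNReal : ℝ≥0∞) := by
  unfold gaussianNu
  congr 1

lemma integral_gaussianNu {E : Type*} [NormedAddCommGroup E] [NormedSpace ℝ E] (f : ℝ → E) :
    ∫ x, f x ∂gaussianNu = ∫ x, gw x • f x := by
  rw [gaussianNu_eq_wd, integral_withDensity_eq_integral_smul (gw_meas.real_toNNReal) f]
  congr 1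
  ext x
  rw [NNReal.smul_def, Real.coe_toNNReal _ (gw_nonneg x)]

lemma integrable_gaussianNu_iff {E : Type*} [NormedAddCommGroup E] [NormedSpace ℝ E] (f : ℝ → E) :
    Integrable f gaussianNu ↔ Integrable (fun x => gw x • f x) := by
  rw [gaussianNu_eq_wd, integrable_withDensity_iff_integrable_smul (gw_meas.real_toNNReal)]
  have : (fun x => (gw x).toNNReal • f x) = fun x => gw x • f x := by
    ext x; rw [NNReal.smul_def, Real.coe_toNNReal _ (gw_nonneg x)]
  rw [this]

lemma integrable_of_bounded {f : ℝ → ℂ} (hm : AEStronglyMeasurable f gaussianNu)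
    {C : ℝ} (h : ∀ x, ‖f x‖ ≤ C) : Integrable f gaussianNu :=
  Integrable.mono' (integrable_const C) hm (Filter.Eventually.of_forall h)

lemma exp_half_eq (x : ℝ) : rexp (-(1/2) * x ^ 2) = rexp (-x ^ 2 / 2) := by ring_nf

lemma integrable_pow4 : Integrable (fun x : ℝ => x ^ 4 / 8) gaussianNu := by
  rw [integrable_gaussianNu_iff]
  simp_rw [smul_eq_mul]
  have h := integrable_rpow_mul_exp_neg_mul_sq (b := 1/2) (by norm_num) (s := (4:ℝ)) (by norm_num)
  refine (h.const_mul ((Real.sqrt (2 * Real.pi))⁻¹ / 8)).mono'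
    ((gw_meas.mul (by fun_prop)).aestronglyMeasurable) ?_
  refine Filter.Eventually.of_forall fun x => ?_
  have h4 : x ^ (4:ℝ) = x ^ (4:ℕ) := Real.rpow_natCast x 4
  have hg := gw_nonneg x
  rw [Real.norm_eq_abs, _root_.abs_of_nonneg (by positivity)]
  unfold gw
  rw [h4, exp_half_eq]
  exact le_of_eq (by ring)

lemma integrable_abs : Integrable (fun x : ℝ => |x|) gaussianNu := by
  rw [integrable_gaussianNu_iff]
  simp_rw [smul_eq_mul]
  have h := (integrable_rpow_mul_exp_neg_mul_sq (b := 1/2) (by norm_num)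
    (s := (1:ℝ)) (by norm_num)).abs
  refine (h.const_mul ((Real.sqrt (2 * Real.pi))⁻¹)).mono'
    ((gw_meas.mul (by fun_prop)).aestronglyMeasurable) ?_
  refine Filter.Eventually.of_forall fun x => ?_
  have hg := gw_nonneg x
  rw [Real.norm_eq_abs, _root_.abs_of_nonneg (by positivity), Real.rpow_one, _root_.abs_mul,
    Real.abs_exp, exp_half_eq]
  unfold gw
  exact le_of_eq (by ring)


lemma sqrt_re_nonneg (z : ℂ) : 0 ≤ (z ^ (1/2 : ℂ)).re := by
  rcases eq_or_ne z 0 with rfl | hz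
  · rw [Complex.zero_cpow (by norm_num)]; simp
  · rw [Complex.cpow_def_of_ne_zero hz, Complex.exp_re]
    have him : ((Complex.log z) * (1/2 : ℂ)).im = z.arg / 2 := by
      simp [Complex.log_im]; ring
    rw [him]
    have h1 : -(π/2) ≤ z.arg / 2 := by linarith [Complex.neg_pi_lt_arg z]
    have h2 : z.arg / 2 ≤ π/2 := by linarith [Complex.arg_le_pi z]
    exact mul_nonneg (Real.exp_nonneg _) (Real.cos_nonneg_of_mem_Icc ⟨h1, h2⟩)

lemma sq_sqrt' (z : ℂ) : (z ^ (1/2 : ℂ)) ^ (2:ℕ) = z := by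
  rcases eq_or_ne z 0 with rfl | hz
  · rw [Complex.zero_cpow (by norm_num)]; simp
  · have him : ((Complex.log z) * (1/2 : ℂ)).im = z.arg / 2 := by
      simp [Complex.log_im]; ring
    have := Complex.cpow_mul (x := z) (y := (1/2 : ℂ)) ((2:ℕ) : ℂ)
      (by rw [him]; linarith [Complex.neg_pi_lt_arg z, Real.pi_pos])
      (by rw [him]; linarith [Complex.arg_le_pi z, Real.pi_pos])
    rw [← Complex.cpow_natCast (z ^ (1/2:ℂ)) 2, ← this]
    norm_num

lemma sector {z : ℂ} (hz : 0 ≤ z.re) : |(z ^ (1/2:ℂ)).im| ≤ (z ^ (1/2:ℂ)).re := by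
  set μ := z ^ (1/2:ℂ) with hμ
  have h1 : 0 ≤ μ.re := sqrt_re_nonneg z
  have h2 : μ.re ^ 2 - μ.im ^ 2 = z.re := by
    conv_rhs => rw [← sq_sqrt' z, ← hμ]
    rw [sq μ, Complex.mul_re]; ring
  nlinarith [_root_.sq_abs μ.im, abs_nonneg μ.im]

lemma normSq_ge {μ : ℂ} (hμ : |μ.im| ≤ μ.re) (σ : ℝ) :
    (1/2 : ℝ) ≤ Complex.normSq (1 + Complex.I * μ * σ) := by
  have hre : (1 + Complex.I * μ * σ).re = 1 - μ.im * σ := by simp; ring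
  have him : (1 + Complex.I * μ * σ).im = μ.re * σ := by simp
  rw [Complex.normSq_apply, hre, him]
  have h2 : μ.im ^ 2 ≤ μ.re ^ 2 := by nlinarith [_root_.sq_abs μ.im, abs_nonneg μ.im]
  nlinarith [sq_nonneg (μ.im * σ - 1/2), sq_nonneg σ]

lemma ne_zero_of_sector {μ : ℂ} (hμ : |μ.im| ≤ μ.re) (σ : ℝ) :
    (1 + Complex.I * μ * σ) ≠ 0 := by
  intro h
  have := normSq_ge hμ σ
  rw [h] at this
  simp at this
  linarith

lemma mem_slit {μ : ℂ} (hμ : |μ.im| ≤ μ.re) (σ : ℝ) :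
    (1 + Complex.I * μ * σ) ∈ Complex.slitPlane := by
  rw [Complex.mem_slitPlane_iff]
  have hre : (1 + Complex.I * μ * σ).re = 1 - μ.im * σ := by simp; ring
  have him : (1 + Complex.I * μ * σ).im = μ.re * σ := by simp
  rcases eq_or_lt_of_le (abs_nonneg μ.im |>.trans hμ) with h0 | h0
  · left
    have him0 : μ.im = 0 := by
      have h' : |μ.im| ≤ 0 := le_of_le_of_eq hμ h0.symm
      simpa using abs_nonpos_iff.mp h'
    rw [hre, him0]; norm_num
  · rcases eq_or_ne σ 0 with rfl | hσ
    · left; rw [hre]; norm_num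
    · right; rw [him]; exact mul_ne_zero (ne_of_gt h0) hσ


lemma rpow_aux {s : ℝ} (hs : s ≤ 0) (hs2 : -2 ≤ s) {t : ℝ} (ht : 1/2 ≤ t) :
    t ^ s ≤ 4 := by
  have h1 : t ^ s ≤ (1/2 : ℝ) ^ s := Real.rpow_le_rpow_of_nonpos (by norm_num) ht hs
  have h2 : (1/2 : ℝ) ^ s = 2 ^ (-s) := by
    rw [show (1/2 : ℝ) = 2⁻¹ by norm_num, ← Real.rpow_neg_one 2, ← Real.rpow_mul (by norm_num)]
    ring_nf
  have h3 : (2:ℝ) ^ (-s) ≤ 2 ^ (2:ℝ) := Real.rpow_le_rpow_of_exponent_le one_le_two (by linarith)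
  have h4 : (2:ℝ) ^ (2:ℝ) = 4 := by
    rw [show (2:ℝ) = ((2:ℕ):ℝ) from by norm_num, Real.rpow_natCast]; norm_num
  calc t ^ s ≤ (1/2:ℝ) ^ s := h1
    _ = 2 ^ (-s) := h2
    _ ≤ 2 ^ (2:ℝ) := h3
    _ = 4 := h4

lemma abs_ge_half {μ : ℂ} (hμ : |μ.im| ≤ μ.re) (σ : ℝ) :
    (1/2 : ℝ) ≤ ‖(1 + Complex.I * μ * σ)‖ := by
  have h := normSq_ge hμ σ
  have h2 := Complex.sq_norm (1 + Complex.I * μ * σ)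
  nlinarith [norm_nonneg (1 + Complex.I * μ * σ)]

lemma norm_cpow_sector {μ : ℂ} (hμ : |μ.im| ≤ μ.re) (σ : ℝ) {s : ℂ} (hs : s.im = 0)
    (h1 : s.re ≤ 0) (h2 : -2 ≤ s.re) : ‖(1 + Complex.I * μ * σ) ^ s‖ ≤ 4 := by
  rw [Complex.norm_cpow_of_ne_zero (ne_zero_of_sector hμ σ), hs]
  simp only [mul_zero, Real.exp_zero, div_one]
  exact rpow_aux h1 h2 (abs_ge_half hμ σ)

lemma ofReal_mul_cpow {r : ℝ} (hr : 0 < r) {z : ℂ} (hz : z ≠ 0) (s : ℂ) :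
    ((r:ℂ) * z) ^ s = (r:ℂ) ^ s * z ^ s := by
  have hr' : (r:ℂ) ≠ 0 := Complex.ofReal_ne_zero.mpr hr.ne'
  rw [Complex.cpow_def_of_ne_zero (mul_ne_zero hr' hz), Complex.cpow_def_of_ne_zero hr',
    Complex.cpow_def_of_ne_zero hz, ← Complex.exp_add, Complex.log_ofReal_mul hr hz,
    Complex.ofReal_log hr.le, add_mul]

lemma cpow_key {w : ℂ} (hw : 0 < w.re) :
    (↑(Real.sqrt (2 * π)) : ℂ)⁻¹ * ((π : ℂ) / (w / 2)) ^ (1/2 : ℂ) = w ^ (-(1/2) : ℂ) := by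
  have hw0 : w ≠ 0 := by intro h; rw [h] at hw; simp at hw
  have harg : w.arg ≠ π := by
    have := Complex.abs_arg_lt_pi_div_two_iff.mpr (Or.inl hw)
    intro h; rw [h] at this
    rw [abs_of_pos Real.pi_pos] at this
    linarith [Real.pi_pos]
  have h1 : (π:ℂ) / (w/2) = ((2*π : ℝ):ℂ) * w⁻¹ := by
    push_cast; field_simp
  rw [h1, ofReal_mul_cpow (by positivity) (inv_ne_zero hw0), Complex.inv_cpow _ _ harg,
    ← Complex.cpow_neg]
  have h2 : ((2*π:ℝ):ℂ) ^ (1/2:ℂ) = (Real.sqrt (2*π) : ℂ) := by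
    have h := Complex.ofReal_cpow (x := 2*π) (by positivity) (1/2)
    rw [show (((1/2:ℝ)):ℂ) = (1/2 : ℂ) by norm_num] at h
    rw [← h, Real.sqrt_eq_rpow]
  rw [h2, ← mul_assoc, inv_mul_cancel₀ (Complex.ofReal_ne_zero.mpr (by positivity)), one_mul]

lemma smul_cexp (c : ℂ) (x : ℝ) :
    gw x • Complex.exp c = (↑(Real.sqrt (2 * π)) : ℂ)⁻¹ *
      (Complex.exp c * Complex.exp (-(1/2 : ℂ) * (x:ℂ) ^ 2)) := by
  unfold gw
  rw [Complex.real_smul]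
  push_cast [Complex.ofReal_exp]
  rw [mul_assoc]
  congr 1
  rw [← Complex.exp_add, ← Complex.exp_add]
  congr 1
  ring

/-- Hubbard–Stratonovich: the Gaussian characteristic function. -/
lemma hubbard (a : ℂ) :
    ∫ σ : ℝ, Complex.exp (Complex.I * a * σ) ∂gaussianNu = Complex.exp (-a ^ 2 / 2) := by
  rw [integral_gaussianNu]
  simp_rw [smul_cexp]
  rw [integral_const_mul, fourierIntegral_gaussian (by norm_num : (0:ℝ) < ((1:ℂ)/2).re) a,
    ← mul_assoc]
  have h1 : (↑(Real.sqrt (2 * π)) : ℂ)⁻¹ * ((π : ℂ) / (1/2)) ^ (1/2 : ℂ) = 1 := by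
    have := cpow_key (w := 1) (by norm_num)
    simpa using this
  rw [h1, one_mul]
  congr 1
  norm_num

/-- complex Gaussian integral against `ν`. -/
lemma inner_gaussian {c : ℂ} (hc : 0 < (1 + c).re) :
    ∫ x : ℝ, Complex.exp (-c * (x:ℂ) ^ 2 / 2) ∂gaussianNu = (1 + c) ^ (-(1/2) : ℂ) := by
  rw [integral_gaussianNu]
  simp_rw [smul_cexp]
  have h : ∀ x : ℝ, Complex.exp (-c * (x:ℂ)^2/2) * Complex.exp (-(1/2:ℂ) * (x:ℂ)^2)
      = Complex.exp (-((1+c)/2) * (x:ℂ)^2) := by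
    intro x
    rw [← Complex.exp_add]
    congr 1
    ring
  simp_rw [h]
  rw [integral_const_mul, integral_gaussian_complex (by simpa using by positivity : 0 < ((1+c)/2).re)]
  exact cpow_key hc

noncomputable def F (l : ℂ) : ℂ := ∫ x : ℝ, Complex.exp (-l * (x:ℂ) ^ 4 / 8) ∂gaussianNu

noncomputable def G (l : ℂ) : ℂ :=
  ∫ σ : ℝ, (1 + Complex.I * l ^ (1/2 : ℂ) * (σ:ℂ)) ^ (-(1/2) : ℂ) ∂gaussianNu

lemma sqrt_real {t : ℝ} (ht : 0 ≤ t) : ((t:ℂ)) ^ (1/2 : ℂ) = ((Real.sqrt t : ℝ) : ℂ) := by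
  have h := Complex.ofReal_cpow ht (1/2)
  rw [show (((1/2:ℝ)):ℂ) = (1/2 : ℂ) by norm_num] at h
  rw [← h, Real.sqrt_eq_rpow]

lemma re_one_add_I_mul (s σ : ℝ) : (1 + Complex.I * (s:ℂ) * (σ:ℂ)).re = 1 := by
  simp [Complex.add_re, Complex.mul_re]

lemma eq_real {t : ℝ} (ht : 0 < t) : F (t:ℂ) = G (t:ℂ) := by
  set s : ℝ := Real.sqrt t with hs_def
  have hs2 : (s:ℂ) ^ 2 = (t:ℂ) := by
    norm_cast
    exact Real.sq_sqrt ht.le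
  have hsq : ((t:ℂ)) ^ (1/2 : ℂ) = (s:ℂ) := sqrt_real ht.le
  have key1 : ∀ x : ℝ, Complex.exp (-(t:ℂ) * (x:ℂ) ^ 4 / 8)
      = ∫ σ : ℝ, Complex.exp (Complex.I * (-((s:ℂ) * (x:ℂ) ^ 2) / 2) * (σ:ℂ)) ∂gaussianNu := by
    intro x
    rw [hubbard]
    congr 1
    linear_combination ((x:ℂ) ^ 4 / 8) * hs2
  have hcont : Continuous (Function.uncurry fun (x : ℝ) (σ : ℝ) =>
      Complex.exp (Complex.I * (-((s:ℂ) * (x:ℂ) ^ 2) / 2) * (σ:ℂ))) := by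
    apply Complex.continuous_exp.comp
    fun_prop
  have hint : Integrable (Function.uncurry fun (x : ℝ) (σ : ℝ) =>
      Complex.exp (Complex.I * (-((s:ℂ) * (x:ℂ) ^ 2) / 2) * (σ:ℂ)))
      (gaussianNu.prod gaussianNu) := by
    refine (integrable_const (1:ℝ)).mono' hcont.aestronglyMeasurable ?_
    refine Filter.Eventually.of_forall fun p => ?_
    rw [Function.uncurry]
    rw [Complex.norm_exp]
    have hz : (Complex.I * (-((s:ℂ) * ((p.1:ℝ):ℂ) ^ 2) / 2) * ((p.2:ℝ):ℂ))
        = (((-(s * p.1 ^ 2) / 2 * p.2 : ℝ)):ℂ) * Complex.I := by push_cast; ring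
    rw [hz]
    simp [Complex.mul_re, ← Complex.ofReal_pow]
  have step1 : F (t:ℂ) = ∫ x : ℝ, ∫ σ : ℝ,
      Complex.exp (Complex.I * (-((s:ℂ) * (x:ℂ) ^ 2) / 2) * (σ:ℂ)) ∂gaussianNu ∂gaussianNu := by
    unfold F
    exact integral_congr_ae (Filter.Eventually.of_forall fun x => key1 x)
  rw [step1, integral_integral_swap hint]
  have inner_eq : ∀ σ : ℝ, (∫ x : ℝ,
      Complex.exp (Complex.I * (-((s:ℂ) * (x:ℂ) ^ 2) / 2) * (σ:ℂ)) ∂gaussianNu)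
      = (1 + Complex.I * (s:ℂ) * (σ:ℂ)) ^ (-(1/2) : ℂ) := by
    intro σ
    have hrw : ∀ x : ℝ, Complex.I * (-((s:ℂ) * (x:ℂ) ^ 2) / 2) * (σ:ℂ)
        = -(Complex.I * (s:ℂ) * (σ:ℂ)) * (x:ℂ) ^ 2 / 2 := fun x => by ring
    simp_rw [hrw]
    exact inner_gaussian (by rw [re_one_add_I_mul]; norm_num)
  rw [integral_congr_ae (Filter.Eventually.of_forall inner_eq)]
  unfold G
  simp_rw [hsq]

lemma re_neg_mul_pow4 (l : ℂ) (x : ℝ) : (-l * (x:ℂ) ^ 4 / 8).re = -(l.re * x ^ 4 / 8) := by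
  have : -l * (x:ℂ) ^ 4 / 8 = ((x ^ 4 / 8 : ℝ) : ℂ) * (-l) := by push_cast; ring
  rw [this, Complex.mul_re]
  simp only [Complex.ofReal_re, Complex.ofReal_im, Complex.neg_re, Complex.neg_im]
  ring

lemma norm_F_integrand {l : ℂ} (hl : 0 ≤ l.re) (x : ℝ) :
    ‖Complex.exp (-l * (x:ℂ) ^ 4 / 8)‖ ≤ 1 := by
  rw [Complex.norm_exp, re_neg_mul_pow4]
  rw [Real.exp_le_one_iff]
  have : 0 ≤ l.re * x ^ 4 / 8 := by positivity
  linarith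

lemma integrable_F {l : ℂ} (hl : 0 ≤ l.re) :
    Integrable (fun x : ℝ => Complex.exp (-l * (x:ℂ) ^ 4 / 8)) gaussianNu := by
  refine integrable_of_bounded ?_ (norm_F_integrand hl)
  exact (Complex.continuous_exp.comp (by fun_prop)).aestronglyMeasurable

lemma cont_G_integrand {l : ℂ} (hl : 0 ≤ l.re) :
    Continuous (fun σ : ℝ => (1 + Complex.I * l ^ (1/2:ℂ) * (σ:ℂ)) ^ (-(1/2) : ℂ)) := by
  rw [continuous_iff_continuousAt]
  intro σ
  have hbase : Continuous (fun σ : ℝ => 1 + Complex.I * l ^ (1/2:ℂ) * (σ:ℂ)) := by fun_prop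
  exact ContinuousAt.comp (x := σ) (continuousAt_cpow_const (mem_slit (sector hl) σ))
    hbase.continuousAt

lemma integrable_G {l : ℂ} (hl : 0 ≤ l.re) :
    Integrable (fun σ : ℝ => (1 + Complex.I * l ^ (1/2:ℂ) * (σ:ℂ)) ^ (-(1/2) : ℂ)) gaussianNu := by
  refine integrable_of_bounded (cont_G_integrand hl).aestronglyMeasurable
    (fun σ => norm_cpow_sector (sector hl) σ (by norm_num) (by norm_num) (by norm_num))

lemma ball_re {l₀ l : ℂ} {ε : ℝ} (h : l ∈ Metric.ball l₀ ε) : l₀.re - ε < l.re := by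
  have h1 : |(l - l₀).re| ≤ ‖l - l₀‖ := Complex.abs_re_le_norm _
  rw [Metric.mem_ball, Complex.dist_eq] at h
  have := abs_le.mp h1
  simp only [Complex.sub_re] at this
  linarith [this.1]

lemma F_hasDeriv {l₀ : ℂ} (h : 0 < l₀.re) :
    HasDerivAt F (∫ x : ℝ, Complex.exp (-l₀ * (x:ℂ) ^ 4 / 8) * (-(x:ℂ) ^ 4 / 8) ∂gaussianNu) l₀ := by
  have hε : 0 < l₀.re / 2 := by linarith
  have key := hasDerivAt_integral_of_dominated_loc_of_deriv_le (μ := gaussianNu)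
    (F := fun l (x : ℝ) => Complex.exp (-l * (x:ℂ) ^ 4 / 8))
    (F' := fun l (x : ℝ) => Complex.exp (-l * (x:ℂ) ^ 4 / 8) * (-(x:ℂ) ^ 4 / 8))
    (x₀ := l₀) (bound := fun x => x ^ 4 / 8) (Metric.ball_mem_nhds l₀ hε)
    (Filter.Eventually.of_forall fun l =>
      (Complex.continuous_exp.comp (by fun_prop)).aestronglyMeasurable)
    (integrable_F h.le)
    ((Complex.continuous_exp.comp (by fun_prop)).mul (by fun_prop)).aestronglyMeasurable
    ?_ integrable_pow4 ?_
  · exact key.2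
  · refine Filter.Eventually.of_forall fun x => fun l hl => ?_
    have hre : 0 ≤ l.re := by have := ball_re hl; linarith
    rw [norm_mul]
    have h1 : ‖Complex.exp (-l * (x:ℂ) ^ 4 / 8)‖ ≤ 1 := norm_F_integrand hre x
    have h2 : ‖(-(x:ℂ) ^ 4 / 8)‖ = x ^ 4 / 8 := by
      rw [show (-(x:ℂ) ^ 4 / 8) = ((-(x ^ 4) / 8 : ℝ) : ℂ) by push_cast; ring]
      rw [Complex.norm_real, Real.norm_eq_abs, abs_div, abs_neg, _root_.abs_of_nonneg
        (by positivity : (0:ℝ) ≤ x ^ 4)]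
      norm_num
    rw [h2]
    have h3 : (0:ℝ) ≤ x ^ 4 / 8 := by positivity
    calc ‖Complex.exp (-l * (x:ℂ) ^ 4 / 8)‖ * (x ^ 4 / 8) ≤ 1 * (x ^ 4 / 8) :=
          mul_le_mul_of_nonneg_right h1 h3
      _ = x ^ 4 / 8 := one_mul _
  · refine Filter.Eventually.of_forall fun x => fun l hl => ?_
    have hd : HasDerivAt (fun l : ℂ => -l * (x:ℂ) ^ 4 / 8) (-(x:ℂ) ^ 4 / 8) l := by
      have := ((hasDerivAt_id l).neg.mul_const ((x:ℂ) ^ 4)).div_const (8 : ℂ)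
      simpa using this
    exact hd.cexp

lemma G_hasDeriv {l₀ : ℂ} (h : 0 < l₀.re) : DifferentiableAt ℂ G l₀ := by
  set r₀ : ℝ := l₀.re / 2 with hr₀
  have hr₀pos : 0 < r₀ := by rw [hr₀]; linarith
  have hballre : ∀ l ∈ Metric.ball l₀ r₀, r₀ < l.re := fun l hl => by
    have := ball_re hl; rw [hr₀] at this ⊢; linarith
  have key := hasDerivAt_integral_of_dominated_loc_of_deriv_le (μ := gaussianNu)
    (F := fun l (σ : ℝ) => (1 + Complex.I * l ^ (1/2:ℂ) * (σ:ℂ)) ^ (-(1/2) : ℂ))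
    (F' := fun l (σ : ℝ) => (-(1/2:ℂ) * (1 + Complex.I * l ^ (1/2:ℂ) * (σ:ℂ)) ^ (-(1/2) - 1 : ℂ))
      * (Complex.I * ((1/2:ℂ) * l ^ ((1/2:ℂ) - 1)) * (σ:ℂ)))
    (x₀ := l₀) (bound := fun σ => 4 * r₀ ^ (-(1/2) : ℝ) * |σ|) (Metric.ball_mem_nhds l₀ hr₀pos)
    ?_ ?_ ?_ ?_ ?_ ?_
  · exact key.2.differentiableAt
  · -- measurability of F l for l near l₀
    filter_upwards [Metric.ball_mem_nhds l₀ hr₀pos] with l hl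
    exact (cont_G_integrand (le_of_lt (lt_trans hr₀pos (hballre l hl)))).aestronglyMeasurable
  · exact integrable_G h.le
  · -- measurability of F' l₀
    have hc : Continuous (fun σ : ℝ =>
        (1 + Complex.I * l₀ ^ (1/2:ℂ) * (σ:ℂ)) ^ (-(1/2) - 1 : ℂ)) := by
      rw [continuous_iff_continuousAt]
      intro σ
      exact ContinuousAt.comp (x := σ) (continuousAt_cpow_const (mem_slit (sector h.le) σ))
        (by fun_prop)
    exact ((continuous_const.mul hc).mul (by fun_prop)).aestronglyMeasurable
  · -- bound
    refine Filter.Eventually.of_forall fun σ => fun l hl => ?_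
    have hlre : 0 < l.re := lt_trans hr₀pos (hballre l hl)
    have hl0 : l ≠ 0 := fun hh => by rw [hh] at hlre; simp at hlre
    have hA : ‖(1 + Complex.I * l ^ (1/2:ℂ) * (σ:ℂ)) ^ (-(1/2) - 1 : ℂ)‖ ≤ 4 :=
      norm_cpow_sector (sector hlre.le) σ (by norm_num) (by norm_num) (by norm_num)
    have hB : ‖l ^ ((1/2:ℂ) - 1)‖ ≤ r₀ ^ (-(1/2) : ℝ) := by
      rw [Complex.norm_cpow_of_ne_zero hl0]
      have him : ((1/2:ℂ) - 1).im = 0 := by norm_num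
      have hre : ((1/2:ℂ) - 1).re = -(1/2) := by norm_num
      rw [him, hre, mul_zero, Real.exp_zero, div_one]
      refine Real.rpow_le_rpow_of_nonpos hr₀pos ?_ (by norm_num)
      exact le_trans (le_of_lt (hballre l hl)) (Complex.re_le_norm l)
    have e1 : ‖(-(1/2:ℂ) * (1 + Complex.I * l ^ (1/2:ℂ) * (σ:ℂ)) ^ (-(1/2) - 1 : ℂ))
        * (Complex.I * ((1/2:ℂ) * l ^ ((1/2:ℂ) - 1)) * (σ:ℂ))‖
        = (1/2) * ‖(1 + Complex.I * l ^ (1/2:ℂ) * (σ:ℂ)) ^ (-(1/2) - 1 : ℂ)‖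
          * (1 * ((1/2) * ‖l ^ ((1/2:ℂ) - 1)‖) * |σ|) := by
      simp only [norm_mul, norm_neg, Complex.norm_I, Complex.norm_real, Real.norm_eq_abs]
      norm_num
    rw [e1]
    have hrp : 0 ≤ r₀ ^ (-(1/2) : ℝ) := Real.rpow_nonneg hr₀pos.le _
    have hAnn := norm_nonneg ((1 + Complex.I * l ^ (1/2:ℂ) * (σ:ℂ)) ^ (-(1/2) - 1 : ℂ))
    have hBnn := norm_nonneg (l ^ ((1/2:ℂ) - 1))
    have hσnn := abs_nonneg σ
    nlinarith [mul_le_mul hA hB hBnn (by norm_num : (0:ℝ) ≤ 4),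
      mul_le_mul_of_nonneg_right (mul_le_mul hA hB hBnn (by norm_num : (0:ℝ) ≤ 4)) hσnn]
  · exact (integrable_abs.const_mul _)
  · -- differentiability
    refine Filter.Eventually.of_forall fun σ => fun l hl => ?_
    have hlre : 0 < l.re := lt_trans hr₀pos (hballre l hl)
    have h1 : HasDerivAt (fun z : ℂ => z ^ (1/2:ℂ)) ((1/2:ℂ) * l ^ ((1/2:ℂ) - 1)) l :=
      (Complex.hasStrictDerivAt_cpow_const (Or.inl hlre)).hasDerivAt
    have hu : HasDerivAt (fun z : ℂ => 1 + Complex.I * z ^ (1/2:ℂ) * (σ:ℂ))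
        (Complex.I * ((1/2:ℂ) * l ^ ((1/2:ℂ) - 1)) * (σ:ℂ)) l :=
      ((h1.const_mul Complex.I).mul_const ((σ:ℂ))).const_add 1
    have h2 : HasDerivAt (fun w : ℂ => w ^ (-(1/2) : ℂ))
        (-(1/2:ℂ) * (1 + Complex.I * l ^ (1/2:ℂ) * (σ:ℂ)) ^ (-(1/2) - 1 : ℂ))
        (1 + Complex.I * l ^ (1/2:ℂ) * (σ:ℂ)) :=
      (Complex.hasStrictDerivAt_cpow_const (mem_slit (sector hlre.le) σ)).hasDerivAt
    exact h2.comp l hu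

lemma eqOn_U : Set.EqOn F G {z : ℂ | 0 < z.re} := by
  have hopen : IsOpen {z : ℂ | 0 < z.re} := isOpen_lt continuous_const Complex.continuous_re
  have hF : AnalyticOnNhd ℂ F {z : ℂ | 0 < z.re} := DifferentiableOn.analyticOnNhd
    (fun l hl => ((F_hasDeriv hl).differentiableAt).differentiableWithinAt) hopen
  have hG : AnalyticOnNhd ℂ G {z : ℂ | 0 < z.re} := DifferentiableOn.analyticOnNhd
    (fun l hl => (G_hasDeriv hl).differentiableWithinAt) hopen
  refine hF.eqOn_of_preconnected_of_frequently_eq hG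
    (convex_halfSpace_re_gt 0).isPreconnected (z₀ := 1) (by norm_num) ?_
  have htt : Filter.Tendsto (fun n : ℕ => ((1 + ((n:ℝ)+1)⁻¹ : ℝ) : ℂ)) Filter.atTop
      (nhdsWithin 1 {(1:ℂ)}ᶜ) := by
    refine tendsto_nhdsWithin_of_tendsto_nhds_of_eventually_within _ ?_ ?_
    · have hr : Filter.Tendsto (fun n : ℕ => (1 + ((n:ℝ)+1)⁻¹ : ℝ)) Filter.atTop (nhds 1) := by
        have := tendsto_one_div_add_atTop_nhds_zero_nat (𝕜 := ℝ)
        have h2 := this.const_add (1 : ℝ)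
        simpa [one_div] using h2
      have := (Complex.continuous_ofReal.tendsto 1).comp hr
      simpa [Function.comp_def] using this
    · refine Filter.Eventually.of_forall fun n => ?_
      simp only [Set.mem_compl_iff, Set.mem_singleton_iff]
      intro hh
      have : (1 + ((n:ℝ)+1)⁻¹ : ℝ) = 1 := by exact_mod_cast hh
      have hpos : (0:ℝ) < ((n:ℝ)+1)⁻¹ := by positivity
      linarith
  refine htt.frequently (Filter.Frequently.of_forall fun n => ?_)
  exact eq_real (by positivity)

lemma contWithin_F {l₀ : ℂ} (hl₀ : 0 ≤ l₀.re) :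
    ContinuousWithinAt F {z : ℂ | 0 ≤ z.re} l₀ := by
  refine continuousWithinAt_of_dominated
    (F := fun l (x : ℝ) => Complex.exp (-l * (x:ℂ) ^ 4 / 8)) (bound := fun _ => 1)
    ?_ ?_ (integrable_const 1) ?_
  · refine eventually_nhdsWithin_of_forall fun l hl => ?_
    exact (Complex.continuous_exp.comp (by fun_prop)).aestronglyMeasurable
  · refine eventually_nhdsWithin_of_forall fun l hl => ?_
    exact Filter.Eventually.of_forall fun x => norm_F_integrand hl x
  · refine Filter.Eventually.of_forall fun x => ?_
    exact (Complex.continuous_exp.comp (by fun_prop)).continuousWithinAt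

lemma cont_sqrt {l₀ : ℂ} (hl₀ : 0 ≤ l₀.re) :
    ContinuousAt (fun l : ℂ => l ^ (1/2 : ℂ)) l₀ := by
  rcases eq_or_ne l₀ 0 with rfl | h0
  · have h := Complex.continuousAt_cpow_zero_of_re_pos (z := (1/2:ℂ)) (by norm_num)
    have := h.comp (x := (0:ℂ)) (continuous_id.prodMk continuous_const).continuousAt
    simpa [Function.comp_def] using this
  · refine continuousAt_cpow_const ?_
    rw [Complex.mem_slitPlane_iff]
    rcases lt_or_eq_of_le hl₀ with h | h
    · exact Or.inl h
    · right
      intro him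
      exact h0 (Complex.ext (by simp [← h]) him)

lemma contWithin_G {l₀ : ℂ} (hl₀ : 0 ≤ l₀.re) :
    ContinuousWithinAt G {z : ℂ | 0 ≤ z.re} l₀ := by
  refine continuousWithinAt_of_dominated
    (F := fun l (σ : ℝ) => (1 + Complex.I * l ^ (1/2:ℂ) * (σ:ℂ)) ^ (-(1/2) : ℂ))
    (bound := fun _ => 4) ?_ ?_ (integrable_const 4) ?_
  · refine eventually_nhdsWithin_of_forall fun l hl => ?_
    exact (cont_G_integrand hl).aestronglyMeasurable
  · refine eventually_nhdsWithin_of_forall fun l hl => ?_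
    exact Filter.Eventually.of_forall fun σ =>
      norm_cpow_sector (sector hl) σ (by norm_num) (by norm_num) (by norm_num)
  · refine Filter.Eventually.of_forall fun σ => ?_
    have hbase : ContinuousAt (fun l : ℂ => 1 + Complex.I * l ^ (1/2:ℂ) * (σ:ℂ)) l₀ := by
      exact continuousAt_const.add (((cont_sqrt hl₀).const_mul Complex.I).mul_const ((σ:ℂ)))
    have houter : ContinuousAt (fun w : ℂ => w ^ (-(1/2) : ℂ))
        (1 + Complex.I * l₀ ^ (1/2:ℂ) * (σ:ℂ)) :=
      continuousAt_cpow_const (mem_slit (sector hl₀) σ)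
    exact (ContinuousAt.comp (x := l₀) houter hbase).continuousWithinAt

lemma F_eq_G {l : ℂ} (hl : 0 ≤ l.re) : F l = G l := by
  have hseq : Filter.Tendsto (fun n : ℕ => l + (((n:ℝ)+1)⁻¹ : ℝ)) Filter.atTop
      (nhdsWithin l {z : ℂ | 0 ≤ z.re}) := by
    refine tendsto_nhdsWithin_of_tendsto_nhds_of_eventually_within _ ?_ ?_
    · have hr : Filter.Tendsto (fun n : ℕ => ((((n:ℝ)+1)⁻¹ : ℝ) : ℂ)) Filter.atTop (nhds 0) := by
        have := tendsto_one_div_add_atTop_nhds_zero_nat (𝕜 := ℝ)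
        have h2 := (Complex.continuous_ofReal.tendsto 0).comp this
        simpa [one_div, Function.comp_def] using h2
      have := hr.const_add l
      simpa using this
    · refine Filter.Eventually.of_forall fun n => ?_
      simp only [Set.mem_setOf_eq, Complex.add_re, Complex.ofReal_re]
      have hp : (0:ℝ) < ((n:ℝ)+1)⁻¹ := by positivity
      linarith
  have h1 : Filter.Tendsto (fun n : ℕ => F (l + (((n:ℝ)+1)⁻¹ : ℝ))) Filter.atTop (nhds (F l)) :=
    (contWithin_F hl).tendsto.comp hseq
  have h2 : Filter.Tendsto (fun n : ℕ => G (l + (((n:ℝ)+1)⁻¹ : ℝ))) Filter.atTop (nhds (G l)) :=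
    (contWithin_G hl).tendsto.comp hseq
  have heq : ∀ n : ℕ, F (l + (((n:ℝ)+1)⁻¹ : ℝ)) = G (l + (((n:ℝ)+1)⁻¹ : ℝ)) := by
    intro n
    refine eqOn_U ?_
    simp only [Set.mem_setOf_eq, Complex.add_re, Complex.ofReal_re]
    have : (0:ℝ) < ((n:ℝ)+1)⁻¹ := by positivity
    linarith
  exact tendsto_nhds_unique h1 (by simpa only [heq] using h2)

end IFR

/-- **Intermediate-field representation of the zero-dimensional φ⁴ partition function.**
For `Re λ ≥ 0`, `Z(λ) = ∫ e^{−λx⁴/8} dν(x) = ∫ (1 + i√λ σ)^{−1/2} dν(σ)`, both integrals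
converging absolutely; `√λ` and `(·)^{−1/2}` denote principal branches (`Complex.cpow`). -/
theorem intermediate_field_partition_function (lam : ℂ) (hlam : 0 ≤ lam.re) :
    Integrable (fun x : ℝ => Complex.exp (-lam * (x : ℂ) ^ 4 / 8)) gaussianNu ∧
    Integrable (fun σ : ℝ =>
      (1 + Complex.I * lam ^ (1 / 2 : ℂ) * (σ : ℂ)) ^ (-(1 / 2) : ℂ)) gaussianNu ∧
    (∫ x : ℝ, Complex.exp (-lam * (x : ℂ) ^ 4 / 8) ∂gaussianNu) =
      ∫ σ : ℝ, (1 + Complex.I * lam ^ (1 / 2 : ℂ) * (σ : ℂ)) ^ (-(1 / 2) : ℂ) ∂gaussianNu := by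
  refine ⟨IFR.integrable_F hlam, IFR.integrable_G hlam, ?_⟩
  exact IFR.F_eq_G hlam
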